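/- Let p be a sub-critical offspring distribution satisfying (H) and 𝒜 ⊆ ℕ with p(𝒜) > 0. Then there exists at most one θ ∈ I_𝒜 such that m^𝒜(θ) = 1, where m^𝒜(θ) denotes the mean of the probability distribution p_θ^𝒜. -/

import Mathlib

open scoped ENNReal Classical

noncomputable section

namespace GWPaper

/-- `∑_{k ∈ 𝒜} θ^{k-1} p(k)`. -/
def sumIn (p : ℕ → ℝ≥0∞) (A : Set ℕ) (θ : ℝ≥0∞) : ℝ≥0∞ :=
  ∑' k : ℕ, if k ∈ A then θ ^ ((k : ℤ) - 1) * p k else 0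

/-- `∑_{k ∉ 𝒜} θ^{k-1} p(k)`. -/
def sumOut (p : ℕ → ℝ≥0∞) (A : Set ℕ) (θ : ℝ≥0∞) : ℝ≥0∞ :=
  ∑' k : ℕ, if k ∉ A then θ ^ ((k : ℤ) - 1) * p k else 0

/-- `θ ∈ I_𝒜`: `θ > 0` (and finite), `∑_{k ∈ 𝒜} θ^{k-1} p(k) < ∞` and
`∑_{k ∉ 𝒜} θ^{k-1} p(k) ≤ 1`. -/
def memI (p : ℕ → ℝ≥0∞) (A : Set ℕ) (θ : ℝ≥0∞) : Prop :=
  0 < θ ∧ θ ≠ ∞ ∧ sumIn p A θ ≠ ∞ ∧ sumOut p A θ ≤ 1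

/-- The normalizing constant `c_𝒜(θ)`. -/
def cA (p : ℕ → ℝ≥0∞) (A : Set ℕ) (θ : ℝ≥0∞) : ℝ≥0∞ :=
  (1 - sumOut p A θ) / sumIn p A θ

/-- The modified offspring distribution `p_θ^𝒜`. -/
def pTheta (p : ℕ → ℝ≥0∞) (A : Set ℕ) (θ : ℝ≥0∞) (k : ℕ) : ℝ≥0∞ :=
  if k ∈ A then cA p A θ * (θ ^ ((k : ℤ) - 1) * p k) else θ ^ ((k : ℤ) - 1) * p k

/-- `m^𝒜(θ)`: the mean of `p_θ^𝒜`. -/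
def meanA (p : ℕ → ℝ≥0∞) (A : Set ℕ) (θ : ℝ≥0∞) : ℝ≥0∞ :=
  ∑' k : ℕ, (k : ℝ≥0∞) * pTheta p A θ k

/-- real power series -/
def ps (c : ℕ → ℝ) (t : ℝ) : ℝ := ∑' n, c n * t ^ n

/-- derived coefficients -/
def dcoef (c : ℕ → ℝ) : ℕ → ℝ := fun n => ((n : ℝ) + 1) * c (n + 1)

lemma dcoef_nonneg {c : ℕ → ℝ} (hc : ∀ n, 0 ≤ c n) : ∀ n, 0 ≤ dcoef c n := by
  intro n
  exact mul_nonneg (by positivity) (hc _)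

lemma summable_of_le_rad {c : ℕ → ℝ} (hc : ∀ n, 0 ≤ c n) {R t : ℝ} (h0 : 0 ≤ t) (h : t ≤ R)
    (hs : Summable fun n => c n * R ^ n) : Summable fun n => c n * t ^ n := by
  refine hs.of_nonneg_of_le (fun n => mul_nonneg (hc n) (pow_nonneg h0 n)) (fun n => ?_)
  exact mul_le_mul_of_nonneg_left (pow_le_pow_left₀ h0 h n) (hc n)

lemma summable_pow_mul {c : ℕ → ℝ} (hc : ∀ n, 0 ≤ c n) {R t : ℝ}
    (hs : Summable fun n => c n * R ^ n) (h0 : 0 ≤ t) (htR : t < R) (k : ℕ) :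
    Summable fun n : ℕ => (n : ℝ) ^ k * (c n * t ^ n) := by
  have hR : 0 < R := lt_of_le_of_lt h0 htR
  obtain ⟨M, hM⟩ : ∃ M : ℝ, ∀ n, c n * R ^ n ≤ M := by
    obtain ⟨M, hM⟩ := (hs.tendsto_atTop_zero.bddAbove_range).imp (fun M h => h)
    exact ⟨M, fun n => hM ⟨n, rfl⟩⟩
  have hgeom : Summable fun n : ℕ => M * ((n : ℝ) ^ k * (t / R) ^ n) := by
    refine (summable_pow_mul_geometric_of_norm_lt_one k ?_).mul_left M
    rw [norm_div, Real.norm_eq_abs, Real.norm_eq_abs, abs_of_nonneg h0,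
      abs_of_nonneg hR.le, div_lt_one hR]
    exact htR
  refine hgeom.of_nonneg_of_le (fun n => mul_nonneg (by positivity) (mul_nonneg (hc n) (pow_nonneg h0 n))) (fun n => ?_)
  have h1 : (n : ℝ) ^ k * (c n * t ^ n) = (c n * R ^ n) * ((n : ℝ) ^ k * (t / R) ^ n) := by
    field_simp
    rw [div_pow]
    field_simp
  rw [h1]
  exact mul_le_mul_of_nonneg_right (hM n) (by positivity)

lemma summable_dcoef {c : ℕ → ℝ} (hc : ∀ n, 0 ≤ c n) {R t : ℝ}
    (hs : Summable fun n => c n * R ^ n) (h0 : 0 < t) (htR : t < R) :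
    Summable fun n => dcoef c n * t ^ n := by
  have h1 := summable_pow_mul hc hs h0.le htR 1
  have h2 : Summable fun n => (((n : ℕ) : ℝ) + 1) ^ 1 * (c (n + 1) * t ^ (n + 1)) := by
    have := (summable_nat_add_iff 1).2 h1
    refine this.congr fun n => ?_
    push_cast
    ring
  refine (h2.div_const t).congr fun n => ?_
  unfold dcoef
  field_simp
  ring

/-- summability of dcoef series at the endpoint, given first-moment summability there -/
lemma summable_dcoef_of_moment {c : ℕ → ℝ} {t : ℝ} (h0 : 0 < t)
    (hs : Summable fun n : ℕ => (n : ℝ) * c n * t ^ n) :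
    Summable fun n => dcoef c n * t ^ n := by
  have h2 : Summable fun n : ℕ => ((n : ℝ) + 1) * c (n + 1) * t ^ (n + 1) := by
    have := (summable_nat_add_iff 1).2 hs
    refine this.congr fun n => ?_
    push_cast
    ring
  refine (h2.div_const t).congr fun n => ?_
  unfold dcoef
  field_simp
  ring

lemma ps_nonneg {c : ℕ → ℝ} (hc : ∀ n, 0 ≤ c n) {t : ℝ} (h0 : 0 ≤ t) : 0 ≤ ps c t :=
  tsum_nonneg fun n => mul_nonneg (hc n) (pow_nonneg h0 n)

lemma ps_pos {c : ℕ → ℝ} (hc : ∀ n, 0 ≤ c n) {t : ℝ} (h0 : 0 < t) {a : ℕ} (ha : 0 < c a)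
    (hs : Summable fun n => c n * t ^ n) : 0 < ps c t := by
  have : c a * t ^ a ≤ ps c t := Summable.le_tsum hs a fun j _ => mul_nonneg (hc j) (pow_nonneg h0.le j)
  nlinarith [pow_pos h0 a]

/-- first moment tsum identity: `∑ n c n t^n = t * ps (dcoef c) t`. -/
lemma tsum_moment_eq {c : ℕ → ℝ} {t : ℝ} (h0 : 0 < t)
    (hs : Summable fun n : ℕ => (n : ℝ) * c n * t ^ n) :
    ∑' n : ℕ, (n : ℝ) * c n * t ^ n = t * ps (dcoef c) t := by
  rw [Summable.tsum_eq_zero_add hs]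
  unfold ps
  rw [← tsum_mul_left]
  simp only [Nat.cast_zero, zero_mul, pow_zero, zero_add]
  refine tsum_congr fun n => ?_
  unfold dcoef
  push_cast
  ring

lemma hasDerivAt_ps {c : ℕ → ℝ} (hc : ∀ n, 0 ≤ c n) {R x : ℝ}
    (hs : Summable fun n => c n * R ^ n) (hx : 0 < x) (hxR : x < R) :
    HasDerivAt (ps c) (ps (dcoef c) x) x := by
  set ρ : ℝ := (x + R) / 2 with hρ
  have hxρ : x < ρ := by rw [hρ]; linarith
  have hρR : ρ < R := by rw [hρ]; linarith
  have hρ0 : 0 < ρ := lt_trans hx hxρ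
  have husum : Summable fun n : ℕ => (n : ℝ) * c n * ρ ^ n / ρ := by
    refine ((summable_pow_mul hc hs hρ0.le hρR 1).div_const ρ).congr fun n => ?_
    ring
  have key : HasDerivAt (fun t => ∑' n, c n * t ^ n)
      (∑' n : ℕ, c n * ((n : ℝ) * x ^ (n - 1))) x := by
    refine hasDerivAt_tsum_of_isPreconnected (𝕜 := ℝ) (F := ℝ)
      (g := fun n t => c n * t ^ n) (g' := fun n y => c n * ((n : ℝ) * y ^ (n - 1)))
      (u := fun n : ℕ => (n : ℝ) * c n * ρ ^ n / ρ) (t := Set.Ioo (-ρ) ρ) (y₀ := x)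
      husum (isOpen_Ioo) (isPreconnected_Ioo) (fun n y _ => ?_) (fun n y hy => ?_) ?_ ?_ ?_
    · exact (hasDerivAt_pow n y).const_mul (c n)
    · have hyρ : |y| ≤ ρ := by
        rw [abs_le]
        exact ⟨(Set.mem_Ioo.1 hy).1.le, (Set.mem_Ioo.1 hy).2.le⟩
      have hb : ‖c n * ((n : ℝ) * y ^ (n - 1))‖ = c n * ((n : ℝ) * |y| ^ (n - 1)) := by
        rw [Real.norm_eq_abs, abs_mul, abs_mul, abs_pow, abs_of_nonneg (hc n),
          abs_of_nonneg (n.cast_nonneg)]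
      rw [hb]
      rcases n with _ | m
      · simp
      · have hpow : |y| ^ m ≤ ρ ^ m := pow_le_pow_left₀ (abs_nonneg y) hyρ m
        have hcoef : (0:ℝ) ≤ ((m + 1 : ℕ) : ℝ) * c (m + 1) :=
          mul_nonneg (Nat.cast_nonneg _) (hc _)
        calc c (m+1) * (((m+1 : ℕ) : ℝ) * |y| ^ (m + 1 - 1))
            = ((m+1 : ℕ) : ℝ) * c (m+1) * |y| ^ m := by norm_num; ring
          _ ≤ ((m+1 : ℕ) : ℝ) * c (m+1) * ρ ^ m := mul_le_mul_of_nonneg_left hpow hcoef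
          _ = ((m+1 : ℕ) : ℝ) * c (m+1) * ρ ^ (m+1) / ρ := by
              rw [pow_succ]
              field_simp
    · exact Set.mem_Ioo.2 ⟨by linarith, hxρ⟩
    · exact summable_of_le_rad hc hx.le (le_of_lt hxR) hs
    · exact Set.mem_Ioo.2 ⟨by linarith, hxρ⟩
  have hsum2 : Summable fun n : ℕ => c n * ((n : ℝ) * x ^ (n - 1)) := by
    refine ((summable_pow_mul hc hs hx.le hxR 1).div_const x).congr fun n => ?_
    rcases n with _ | m
    · simp
    · have : x ^ (m + 1) = x ^ m * x := pow_succ x m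
      field_simp
      simp
      ring
  have heq : (∑' n : ℕ, c n * ((n : ℝ) * x ^ (n - 1))) = ps (dcoef c) x := by
    rw [Summable.tsum_eq_zero_add hsum2]
    simp only [Nat.cast_zero, zero_mul, mul_zero, zero_add]
    exact tsum_congr fun n => by unfold dcoef; push_cast; ring_nf
  rw [← heq]
  unfold ps
  exact key

lemma continuousOn_ps_aux (d : ℕ → ℝ) (e : ℕ → ℕ) (hd : ∀ n, 0 ≤ d n) {R : ℝ} (hR : 0 ≤ R)
    (hs : Summable fun n => d n * R ^ e n) :
    ContinuousOn (fun t => ∑' n, d n * t ^ e n) (Set.Icc 0 R) := by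
  set cl : ℝ → ℝ := fun t => max 0 (min t R) with hcl
  have hcl0 : ∀ t, 0 ≤ cl t := fun t => le_max_left _ _
  have hclR : ∀ t, cl t ≤ R := fun t => max_le hR (min_le_right _ _)
  have hcont : Continuous fun x => ∑' n, d n * (cl x) ^ e n := by
    refine continuous_tsum (fun i => ?_) hs (fun n x => ?_)
    · have hclc : Continuous cl := continuous_const.max (continuous_id.min continuous_const)
      exact continuous_const.mul (hclc.pow (e i))
    · rw [Real.norm_eq_abs, abs_mul, abs_of_nonneg (hd n), abs_of_nonneg (pow_nonneg (hcl0 x) _)]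
      exact mul_le_mul_of_nonneg_left (pow_le_pow_left₀ (hcl0 x) (hclR x) _) (hd n)
  refine ContinuousOn.congr hcont.continuousOn fun t ht => ?_
  have : cl t = t := by
    rw [hcl]
    simp only
    rw [min_eq_left (Set.mem_Icc.1 ht).2, max_eq_right (Set.mem_Icc.1 ht).1]
  rw [this]

lemma continuousOn_ps {c : ℕ → ℝ} (hc : ∀ n, 0 ≤ c n) {R : ℝ} (hR : 0 ≤ R)
    (hs : Summable fun n => c n * R ^ n) : ContinuousOn (ps c) (Set.Icc 0 R) :=
  continuousOn_ps_aux c id hc hR hs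

/-- strict tangent bound below the chord: `ps q x < x` inside the interval. -/
lemma ps_lt_interior {q : ℕ → ℝ} (hq : ∀ n, 0 ≤ q n) {t₁ t₂ x : ℝ} (h1 : 0 < t₁)
    (h1x : t₁ < x) (hx2 : x < t₂)
    (hs2 : Summable fun n => q n * t₂ ^ n)
    (hD1 : ∑' n, q n * t₁ ^ n < t₁) (hD2 : ∑' n, q n * t₂ ^ n < t₂) :
    ps q x < x := by
  have h12 : t₁ < t₂ := lt_trans h1x hx2
  set lam : ℝ := (t₂ - x) / (t₂ - t₁) with hlam
  have hlam0 : 0 < lam := by apply div_pos <;> linarith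
  have hlam1 : lam < 1 := by rw [hlam, div_lt_one (by linarith)]; linarith
  have hxlam : x = lam * t₁ + (1 - lam) * t₂ := by
    have hne : t₂ - t₁ ≠ 0 := by linarith
    rw [hlam]
    field_simp
    ring
  have hs1 : Summable fun n => q n * t₁ ^ n := summable_of_le_rad hq h1.le h12.le hs2
  have hterm : ∀ n : ℕ, q n * x ^ n ≤ lam * (q n * t₁ ^ n) + (1 - lam) * (q n * t₂ ^ n) := by
    intro n
    have hcvx := (convexOn_pow (𝕜 := ℝ) n).2 (Set.mem_Ici.2 h1.le)
      (Set.mem_Ici.2 (by linarith : (0:ℝ) ≤ t₂)) hlam0.le (by linarith : 0 ≤ 1 - lam)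
      (by ring)
    simp only [smul_eq_mul] at hcvx
    calc q n * x ^ n = q n * (lam * t₁ + (1 - lam) * t₂) ^ n := by rw [← hxlam]
      _ ≤ q n * (lam * t₁ ^ n + (1 - lam) * t₂ ^ n) := by
          exact mul_le_mul_of_nonneg_left hcvx (hq n)
      _ = lam * (q n * t₁ ^ n) + (1 - lam) * (q n * t₂ ^ n) := by ring
  have hsum : ps q x ≤ lam * (∑' n, q n * t₁ ^ n) + (1 - lam) * (∑' n, q n * t₂ ^ n) := by
    have hsx : Summable fun n => q n * x ^ n :=
      summable_of_le_rad hq (by linarith) hx2.le hs2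
    calc ps q x ≤ ∑' n, (lam * (q n * t₁ ^ n) + (1 - lam) * (q n * t₂ ^ n)) := by
          exact Summable.tsum_le_tsum hterm hsx ((hs1.mul_left lam).add (hs2.mul_left (1 - lam)))
      _ = lam * (∑' n, q n * t₁ ^ n) + (1 - lam) * (∑' n, q n * t₂ ^ n) := by
          rw [Summable.tsum_add (hs1.mul_left lam) (hs2.mul_left (1 - lam)), tsum_mul_left, tsum_mul_left]
  have : lam * (∑' n, q n * t₁ ^ n) + (1 - lam) * (∑' n, q n * t₂ ^ n)
      < lam * t₁ + (1 - lam) * t₂ := by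
    have h1' : lam * (∑' n, q n * t₁ ^ n) < lam * t₁ := by
      exact mul_lt_mul_of_pos_left hD1 hlam0
    have h2' : (1 - lam) * (∑' n, q n * t₂ ^ n) < (1 - lam) * t₂ := by
      exact mul_lt_mul_of_pos_left hD2 (by linarith)
    linarith
  exact lt_of_le_of_lt hsum (this.trans_eq hxlam.symm)

/-- main real uniqueness lemma (nondegenerate case, ordered points) -/
lemma real_main (q r : ℕ → ℝ) (hq : ∀ n, 0 ≤ q n) (hr : ∀ n, 0 ≤ r n)
    {t₁ t₂ : ℝ} (ht1 : 0 < t₁) (h12 : t₁ < t₂)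
    (hqs : Summable fun n => q n * t₂ ^ n)
    (hqs2 : Summable fun n : ℕ => (n : ℝ) * q n * t₂ ^ n)
    (hrs : Summable fun n => r n * t₂ ^ n)
    (hrs2 : Summable fun n : ℕ => (n : ℝ) * r n * t₂ ^ n)
    (hrpos : ∃ a, 0 < r a)
    (hbig : ∃ k, 2 ≤ k ∧ (0 < q k ∨ 0 < r k))
    (hD1 : ∑' n, q n * t₁ ^ n < t₁) (hD2 : ∑' n, q n * t₂ ^ n < t₂)
    (hE1 : (t₁ - ∑' n, q n * t₁ ^ n) * (∑' n : ℕ, (n : ℝ) * r n * t₁ ^ n)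
        = (t₁ - ∑' n : ℕ, (n : ℝ) * q n * t₁ ^ n) * (∑' n, r n * t₁ ^ n))
    (hE2 : (t₂ - ∑' n, q n * t₂ ^ n) * (∑' n : ℕ, (n : ℝ) * r n * t₂ ^ n)
        = (t₂ - ∑' n : ℕ, (n : ℝ) * q n * t₂ ^ n) * (∑' n, r n * t₂ ^ n)) :
    False := by
  have ht2 : 0 < t₂ := lt_trans ht1 h12
  -- moment summability at t₁
  have hqs1 : Summable fun n : ℕ => (n : ℝ) * q n * t₁ ^ n :=
    (summable_pow_mul hq hqs ht1.le h12 1).congr fun n => by ring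
  have hrs1 : Summable fun n : ℕ => (n : ℝ) * r n * t₁ ^ n :=
    (summable_pow_mul hr hrs ht1.le h12 1).congr fun n => by ring
  set W : ℝ → ℝ := fun t =>
    (t - ps q t) * ps (dcoef r) t - (1 - ps (dcoef q) t) * ps r t with hW
  -- endpoint values vanish
  have hW1 : W t₁ = 0 := by
    have h1 := hE1
    have e1 : (∑' n, q n * t₁ ^ n) = ps q t₁ := rfl
    have e2 : (∑' n, r n * t₁ ^ n) = ps r t₁ := rfl
    rw [tsum_moment_eq ht1 hrs1, tsum_moment_eq ht1 hqs1, e1, e2] at h1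
    have : t₁ * W t₁ = 0 := by
      rw [hW]
      simp only
      linear_combination h1
    rcases mul_eq_zero.mp this with h | h
    · exact absurd h ht1.ne'
    · exact h
  have hW2 : W t₂ = 0 := by
    have h2 := hE2
    have e1 : (∑' n, q n * t₂ ^ n) = ps q t₂ := rfl
    have e2 : (∑' n, r n * t₂ ^ n) = ps r t₂ := rfl
    rw [tsum_moment_eq ht2 hrs2, tsum_moment_eq ht2 hqs2, e1, e2] at h2
    have : t₂ * W t₂ = 0 := by
      rw [hW]
      simp only
      linear_combination h2
    rcases mul_eq_zero.mp this with h | h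
    · exact absurd h ht2.ne'
    · exact h
  -- continuity on [t₁, t₂]
  have hsub : Set.Icc t₁ t₂ ⊆ Set.Icc 0 t₂ := Set.Icc_subset_Icc ht1.le le_rfl
  have hWc : ContinuousOn W (Set.Icc t₁ t₂) := by
    have c1 := continuousOn_ps hq ht2.le hqs
    have c2 := continuousOn_ps hr ht2.le hrs
    have c3 := continuousOn_ps (dcoef_nonneg hq) ht2.le (summable_dcoef_of_moment ht2 hqs2)
    have c4 := continuousOn_ps (dcoef_nonneg hr) ht2.le (summable_dcoef_of_moment ht2 hrs2)
    exact (((continuousOn_id.sub (c1.mono hsub)).mul (c4.mono hsub)).sub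
      ((continuousOn_const.sub (c3.mono hsub)).mul (c2.mono hsub)))
  -- strict derivative positivity on the interior
  have hderiv : ∀ x ∈ Set.Ioo t₁ t₂, 0 < deriv W x := by
    intro x hx
    obtain ⟨hx1, hx2⟩ := hx
    have hx0 : 0 < x := lt_trans ht1 hx1
    set ρ₁ : ℝ := (x + t₂) / 2 with hρ₁
    have hxρ₁ : x < ρ₁ := by rw [hρ₁]; linarith
    have hρ₁2 : ρ₁ < t₂ := by rw [hρ₁]; linarith
    have hρ₁0 : 0 < ρ₁ := lt_trans hx0 hxρ₁
    have hsdq : Summable fun n => dcoef q n * ρ₁ ^ n := summable_dcoef hq hqs hρ₁0 hρ₁2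
    have hsdr : Summable fun n => dcoef r n * ρ₁ ^ n := summable_dcoef hr hrs hρ₁0 hρ₁2
    have dGf : HasDerivAt (ps q) (ps (dcoef q) x) x := hasDerivAt_ps hq hqs hx0 hx2
    have dHf : HasDerivAt (ps r) (ps (dcoef r) x) x := hasDerivAt_ps hr hrs hx0 hx2
    have dGd : HasDerivAt (ps (dcoef q)) (ps (dcoef (dcoef q)) x) x :=
      hasDerivAt_ps (dcoef_nonneg hq) hsdq hx0 hxρ₁
    have dHd : HasDerivAt (ps (dcoef r)) (ps (dcoef (dcoef r)) x) x :=
      hasDerivAt_ps (dcoef_nonneg hr) hsdr hx0 hxρ₁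
    have hWd : HasDerivAt W
        (((1 - ps (dcoef q) x) * ps (dcoef r) x + (x - ps q x) * ps (dcoef (dcoef r)) x) -
         ((0 - ps (dcoef (dcoef q)) x) * ps r x + (1 - ps (dcoef q) x) * ps (dcoef r) x)) x := by
      rw [hW]
      exact (((hasDerivAt_id x).sub dGf).mul dHd).sub
        (((hasDerivAt_const x (1:ℝ)).sub dGd).mul dHf)
    have hdW : deriv W x = (x - ps q x) * ps (dcoef (dcoef r)) x
        + ps (dcoef (dcoef q)) x * ps r x := by
      rw [hWd.deriv]
      ring
    rw [hdW]
    -- positivity ingredients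
    have hu : 0 < x - ps q x := by
      have := ps_lt_interior hq ht1 hx1 hx2 hqs hD1 hD2
      linarith
    obtain ⟨a, ha⟩ := hrpos
    have hHf : 0 < ps r x := ps_pos hr hx0 ha (summable_of_le_rad hr hx0.le hx2.le hrs)
    have hGdd0 : 0 ≤ ps (dcoef (dcoef q)) x := ps_nonneg (dcoef_nonneg (dcoef_nonneg hq)) hx0.le
    have hHdd0 : 0 ≤ ps (dcoef (dcoef r)) x := ps_nonneg (dcoef_nonneg (dcoef_nonneg hr)) hx0.le
    obtain ⟨k, hk2, hk⟩ := hbig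
    obtain ⟨m, hm⟩ := Nat.le.dest hk2
    rcases hk with hqk | hrk
    · -- second derivative of the q-part is positive
      have hd : 0 < dcoef (dcoef q) m := by
        have heq : dcoef (dcoef q) m = ((m : ℝ) + 1) * (((m : ℝ) + 2) * q (m + 2)) := by
          unfold dcoef
          push_cast
          ring
        have hk' : q k = q (m + 2) := by rw [← hm]; ring_nf
        rw [heq]
        have : 0 < q (m + 2) := by rw [← hk']; exact hqk
        positivity
      have hGdd : 0 < ps (dcoef (dcoef q)) x :=
        ps_pos (dcoef_nonneg (dcoef_nonneg hq)) hx0 hd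
          (summable_dcoef (dcoef_nonneg hq) hsdq hx0 hxρ₁)
      nlinarith
    · have hd : 0 < dcoef (dcoef r) m := by
        have heq : dcoef (dcoef r) m = ((m : ℝ) + 1) * (((m : ℝ) + 2) * r (m + 2)) := by
          unfold dcoef
          push_cast
          ring
        have hk' : r k = r (m + 2) := by rw [← hm]; ring_nf
        rw [heq]
        have : 0 < r (m + 2) := by rw [← hk']; exact hrk
        positivity
      have hHdd : 0 < ps (dcoef (dcoef r)) x :=
        ps_pos (dcoef_nonneg (dcoef_nonneg hr)) hx0 hd
          (summable_dcoef (dcoef_nonneg hr) hsdr hx0 hxρ₁)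
      nlinarith
  have hmono := strictMonoOn_of_deriv_pos (convex_Icc t₁ t₂) hWc
    (by rwa [interior_Icc])
  have := hmono (Set.left_mem_Icc.2 h12.le) (Set.right_mem_Icc.2 h12.le) h12
  rw [hW1, hW2] at this
  exact lt_irrefl 0 this

/-- degenerate case: `∑ q t^k = t` and `∑ k q t^k = t` at the point `t`,
    while `∑ q s^k ≤ s` at another point `s ≠ t`, forces `q 1 = 1`. -/
lemma degen (q : ℕ → ℝ) (hq : ∀ n, 0 ≤ q n) {s t : ℝ} (hs : 0 < s) (ht : 0 < t)
    (hst : s ≠ t)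
    (hqs_s : Summable fun n => q n * s ^ n)
    (hqs_t : Summable fun n => q n * t ^ n)
    (hqn_t : Summable fun n : ℕ => (n : ℝ) * q n * t ^ n)
    (hG : ∑' n, q n * t ^ n = t) (hN : ∑' n : ℕ, (n : ℝ) * q n * t ^ n = t)
    (hles : ∑' n, q n * s ^ n ≤ s) (hq1 : q 1 < 1) : False := by
  set a : ℝ := s / t - 1 with ha
  have ht0 : t ≠ 0 := ht.ne'
  have ha1 : -1 < a := by
    rw [ha]
    have : 0 < s / t := div_pos hs ht
    linarith
  have ha0 : a ≠ 0 := by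
    rw [ha]
    intro h
    apply hst
    have : s / t = 1 := by linarith
    field_simp at this
    exact this
  have hsa : (1 + a) * t = s := by rw [ha]; field_simp; ring
  -- termwise Bernoulli inequality
  have hterm : ∀ n : ℕ, q n * t ^ n + ((n : ℝ) * q n * t ^ n) * a ≤ q n * s ^ n := by
    intro n
    have hber : 1 + (n : ℝ) * a ≤ (1 + a) ^ n := one_add_mul_le_pow (by linarith) n
    have hsn : (1 + a) ^ n * t ^ n = s ^ n := by rw [← mul_pow, hsa]
    have h0 : 0 ≤ q n * t ^ n := mul_nonneg (hq n) (pow_nonneg ht.le n)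
    calc q n * t ^ n + ((n : ℝ) * q n * t ^ n) * a
        = (q n * t ^ n) * (1 + (n : ℝ) * a) := by ring
      _ ≤ (q n * t ^ n) * (1 + a) ^ n := mul_le_mul_of_nonneg_left hber h0
      _ = q n * s ^ n := by rw [← hsn]; ring
  -- the sum of the left side equals s
  have hsum : ∑' n : ℕ, (q n * t ^ n + ((n : ℝ) * q n * t ^ n) * a) = s := by
    rw [Summable.tsum_add hqs_t (hqn_t.mul_right a), tsum_mul_right, hG, hN]
    linarith [hsa]
  by_cases hbig : ∃ k, 2 ≤ k ∧ 0 < q k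
  · obtain ⟨k, hk2, hk⟩ := hbig
    -- strict Bernoulli at k
    have hstrict : q k * t ^ k + ((k : ℝ) * q k * t ^ k) * a < q k * s ^ k := by
      have hber : 1 + (k : ℝ) * a < (1 + a) ^ k := by
        have h1k : (1 : ℝ) < (k : ℝ) := by exact_mod_cast lt_of_lt_of_le one_lt_two hk2
        have := one_add_mul_self_lt_rpow_one_add ha1.le ha0 h1k
        rwa [Real.rpow_natCast] at this
      have hsn : (1 + a) ^ k * t ^ k = s ^ k := by rw [← mul_pow, hsa]
      have h0 : 0 < q k * t ^ k := mul_pos hk (pow_pos ht k)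
      calc q k * t ^ k + ((k : ℝ) * q k * t ^ k) * a
          = (q k * t ^ k) * (1 + (k : ℝ) * a) := by ring
        _ < (q k * t ^ k) * (1 + a) ^ k := by
            exact mul_lt_mul_of_pos_left hber h0
        _ = q k * s ^ k := by rw [← hsn]; ring
    have : (∑' n : ℕ, (q n * t ^ n + ((n : ℝ) * q n * t ^ n) * a)) < ∑' n, q n * s ^ n :=
      Summable.tsum_lt_tsum hterm hstrict (hqs_t.add (hqn_t.mul_right a)) hqs_s
    rw [hsum] at this
    linarith
  · push_neg at hbig
    have hzero : ∀ k, 2 ≤ k → q k = 0 := fun k hk => le_antisymm (hbig k hk) (hq k)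
    have : ∑' n : ℕ, (n : ℝ) * q n * t ^ n = q 1 * t := by
      rw [tsum_eq_single 1]
      · push_cast; ring
      · intro b hb
        rcases b with _ | _ | m
        · simp
        · exact absurd rfl hb
        · rw [hzero (m + 2) (by omega)]
          ring
    rw [this] at hN
    have hz : (q 1 - 1) * t = 0 := by linarith
    rcases mul_eq_zero.mp hz with h | h
    · linarith
    · exact ht0 h

/-- bridge from ENNReal weighted sums to real power series -/
lemma bridge {θ : ℝ≥0∞} (h0 : θ ≠ 0) (ht : θ ≠ ∞) {f : ℕ → ℝ≥0∞}
    (hfin : (∑' k : ℕ, θ ^ ((k : ℤ) - 1) * f k) ≠ ∞) :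
    Summable (fun k : ℕ => (f k).toReal * θ.toReal ^ k) ∧
    ∑' k : ℕ, (f k).toReal * θ.toReal ^ k
      = θ.toReal * (∑' k : ℕ, θ ^ ((k : ℤ) - 1) * f k).toReal := by
  have hz : ∀ k : ℕ, θ ^ ((k : ℤ) - 1) = θ ^ k * θ⁻¹ := by
    intro k
    rw [sub_eq_add_neg, ENNReal.zpow_add h0 ht, zpow_natCast]
    congr 1
    rw [show (-1 : ℤ) = Int.negSucc 0 by rfl, zpow_negSucc, pow_one]
  have hterm_ne : ∀ k : ℕ, θ ^ ((k : ℤ) - 1) * f k ≠ ∞ := by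
    intro k
    exact ne_top_of_le_ne_top hfin (ENNReal.le_tsum k)
  have key : ∀ k : ℕ, θ ^ k * f k = θ * (θ ^ ((k : ℤ) - 1) * f k) := by
    intro k
    rw [hz k]
    rw [← mul_assoc, ← mul_assoc, mul_comm θ (θ ^ k), mul_assoc (θ ^ k) θ θ⁻¹,
      ENNReal.mul_inv_cancel h0 ht, mul_one]
  have hsum_eq : ∑' k : ℕ, θ ^ k * f k = θ * ∑' k : ℕ, θ ^ ((k : ℤ) - 1) * f k := by
    rw [← ENNReal.tsum_mul_left]
    exact tsum_congr key
  have hfin2 : (∑' k : ℕ, θ ^ k * f k) ≠ ∞ := by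
    rw [hsum_eq]
    exact ENNReal.mul_ne_top ht hfin
  have hterm2_ne : ∀ k : ℕ, θ ^ k * f k ≠ ∞ := by
    intro k
    rw [key k]
    exact ENNReal.mul_ne_top ht (hterm_ne k)
  have htoReal : ∀ k : ℕ, (θ ^ k * f k).toReal = (f k).toReal * θ.toReal ^ k := by
    intro k
    rw [ENNReal.toReal_mul, ENNReal.toReal_pow, mul_comm]
  constructor
  · exact (ENNReal.summable_toReal hfin2).congr fun k => htoReal k
  · calc ∑' k : ℕ, (f k).toReal * θ.toReal ^ k
        = ∑' k : ℕ, (θ ^ k * f k).toReal := by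
          exact tsum_congr fun k => (htoReal k).symm
      _ = (∑' k : ℕ, θ ^ k * f k).toReal := (ENNReal.tsum_toReal_eq hterm2_ne).symm
      _ = θ.toReal * (∑' k : ℕ, θ ^ ((k : ℤ) - 1) * f k).toReal := by
          rw [hsum_eq, ENNReal.toReal_mul]

lemma extract (p : ℕ → ℝ≥0∞) (A : Set ℕ) (θ : ℝ≥0∞)
    (hpA : 0 < ∑' k : ℕ, (if k ∈ A then p k else 0))
    (hm : memI p A θ) (h1 : meanA p A θ = 1)
    (q r : ℕ → ℝ)
    (hqdef : ∀ k, q k = if k ∈ A then 0 else (p k).toReal)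
    (hrdef : ∀ k, r k = if k ∈ A then (p k).toReal else 0) :
    0 < θ.toReal ∧
    Summable (fun k => q k * θ.toReal ^ k) ∧
    Summable (fun k : ℕ => (k : ℝ) * q k * θ.toReal ^ k) ∧
    Summable (fun k => r k * θ.toReal ^ k) ∧
    (∑' k, q k * θ.toReal ^ k) ≤ θ.toReal ∧
    (((∑' k, q k * θ.toReal ^ k) = θ.toReal ∧
        (∑' k : ℕ, (k : ℝ) * q k * θ.toReal ^ k) = θ.toReal)
      ∨ ((∑' k, q k * θ.toReal ^ k) < θ.toReal ∧
         Summable (fun k : ℕ => (k : ℝ) * r k * θ.toReal ^ k) ∧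
         (θ.toReal - ∑' k, q k * θ.toReal ^ k) * (∑' k : ℕ, (k : ℝ) * r k * θ.toReal ^ k)
           = (θ.toReal - ∑' k : ℕ, (k : ℝ) * q k * θ.toReal ^ k)
             * (∑' k, r k * θ.toReal ^ k))) := by
  obtain ⟨hθpos, hθtop, hIn_fin, hOut_le⟩ := hm
  have h0 : θ ≠ 0 := hθpos.ne'
  set t : ℝ := θ.toReal with htdef
  have htpos : 0 < t := ENNReal.toReal_pos h0 hθtop
  -- rewrite sumOut / sumIn via bridge-compatible functions
  have hOutEq : sumOut p A θ = ∑' k : ℕ, θ ^ ((k : ℤ) - 1) * (if k ∈ A then 0 else p k) := by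
    refine tsum_congr fun k => ?_
    by_cases h : k ∈ A <;> simp [h]
  have hInEq : sumIn p A θ = ∑' k : ℕ, θ ^ ((k : ℤ) - 1) * (if k ∈ A then p k else 0) := by
    refine tsum_congr fun k => ?_
    by_cases h : k ∈ A <;> simp [h]
  have hOut_ne : (∑' k : ℕ, θ ^ ((k : ℤ) - 1) * (if k ∈ A then 0 else p k)) ≠ ∞ := by
    rw [← hOutEq]
    exact ne_top_of_le_ne_top ENNReal.one_ne_top hOut_le
  have hIn_ne : (∑' k : ℕ, θ ^ ((k : ℤ) - 1) * (if k ∈ A then p k else 0)) ≠ ∞ := by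
    rw [← hInEq]; exact hIn_fin
  obtain ⟨hqsum0, hqval0⟩ := bridge h0 hθtop hOut_ne
  obtain ⟨hrsum0, hrval0⟩ := bridge h0 hθtop hIn_ne
  have hqtoReal : ∀ k, ((if k ∈ A then 0 else p k) : ℝ≥0∞).toReal = q k := by
    intro k
    rw [hqdef k]
    by_cases h : k ∈ A <;> simp [h]
  have hrtoReal : ∀ k, ((if k ∈ A then p k else 0) : ℝ≥0∞).toReal = r k := by
    intro k
    rw [hrdef k]
    by_cases h : k ∈ A <;> simp [h]
  have hqsum : Summable (fun k => q k * t ^ k) :=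
    hqsum0.congr fun k => by rw [hqtoReal k]
  have hrsum : Summable (fun k => r k * t ^ k) :=
    hrsum0.congr fun k => by rw [hrtoReal k]
  have hqval : ∑' k, q k * t ^ k = t * (sumOut p A θ).toReal := by
    rw [hOutEq, ← hqval0]
    exact tsum_congr fun k => by rw [hqtoReal k]
  have hrval : ∑' k, r k * t ^ k = t * (sumIn p A θ).toReal := by
    rw [hInEq, ← hrval0]
    exact tsum_congr fun k => by rw [hrtoReal k]
  -- decompose the mean
  have hmean_eq : meanA p A θ
      = cA p A θ * (∑' k : ℕ, θ ^ ((k : ℤ) - 1) * (if k ∈ A then (k : ℝ≥0∞) * p k else 0))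
        + ∑' k : ℕ, θ ^ ((k : ℤ) - 1) * (if k ∈ A then 0 else (k : ℝ≥0∞) * p k) := by
    unfold meanA
    rw [← ENNReal.tsum_mul_left, ← ENNReal.tsum_add]
    refine tsum_congr fun k => ?_
    by_cases h : k ∈ A
    · simp only [pTheta, if_pos h]
      ring
    · simp only [pTheta, if_neg h]
      ring
  rw [hmean_eq] at h1
  set SK : ℝ≥0∞ := ∑' k : ℕ, θ ^ ((k : ℤ) - 1) * (if k ∈ A then (k : ℝ≥0∞) * p k else 0)
    with hSKdef
  set SN : ℝ≥0∞ := ∑' k : ℕ, θ ^ ((k : ℤ) - 1) * (if k ∈ A then 0 else (k : ℝ≥0∞) * p k)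
    with hSNdef
  have hSN_le : SN ≤ 1 := by
    rw [← h1]
    exact le_add_self
  have hSN_ne : SN ≠ ∞ := ne_top_of_le_ne_top ENNReal.one_ne_top hSN_le
  obtain ⟨hnqsum0, hnqval0⟩ := bridge h0 hθtop (hSNdef ▸ hSN_ne)
  have hnqtoReal : ∀ k : ℕ, ((if k ∈ A then 0 else (k : ℝ≥0∞) * p k) : ℝ≥0∞).toReal
      = (k : ℝ) * q k := by
    intro k
    rw [hqdef k]
    by_cases h : k ∈ A <;> simp [h]
  have hnqsum : Summable (fun k : ℕ => (k : ℝ) * q k * t ^ k) :=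
    hnqsum0.congr fun k => by rw [hnqtoReal k]
  have hnqval : ∑' k : ℕ, (k : ℝ) * q k * t ^ k = t * SN.toReal := by
    rw [← hnqval0]
    exact tsum_congr fun k => by rw [hnqtoReal k]
  -- sumIn is positive
  obtain ⟨a, ha⟩ : ∃ a, (if a ∈ A then p a else 0) ≠ 0 := by
    by_contra h
    push_neg at h
    have : (∑' k : ℕ, (if k ∈ A then p k else 0)) = 0 := by
      simp only [h, tsum_zero]
    rw [this] at hpA
    exact lt_irrefl 0 hpA
  have haA : a ∈ A := by
    by_contra h
    rw [if_neg h] at ha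
    exact ha rfl
  have hpa : p a ≠ 0 := by rwa [if_pos haA] at ha
  have hIn_ne0 : sumIn p A θ ≠ 0 := by
    have hterm : θ ^ ((a : ℤ) - 1) * p a ≤ sumIn p A θ := by
      unfold sumIn
      calc θ ^ ((a : ℤ) - 1) * p a = (if a ∈ A then θ ^ ((a : ℤ) - 1) * p a else 0) :=
            (if_pos haA).symm
        _ ≤ _ := ENNReal.le_tsum a
    intro hz
    rw [hz] at hterm
    have : θ ^ ((a : ℤ) - 1) * p a = 0 := le_antisymm hterm (zero_le)
    rcases mul_eq_zero.mp this with h | h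
    · exact (ENNReal.zpow_pos h0 hθtop _).ne' h
    · exact hpa h
  have hsir_pos : 0 < (sumIn p A θ).toReal := ENNReal.toReal_pos hIn_ne0 hIn_fin
  have hsor_le : (sumOut p A θ).toReal ≤ 1 := by
    have := ENNReal.toReal_mono ENNReal.one_ne_top hOut_le
    simpa using this
  have hqle : (∑' k, q k * t ^ k) ≤ t := by
    rw [hqval]
    nlinarith
  refine ⟨htpos, hqsum, hnqsum, hrsum, hqle, ?_⟩
  rcases lt_or_eq_of_le hOut_le with hlt | heq
  · -- nondegenerate
    right
    have hOut_netop : sumOut p A θ ≠ ∞ := ne_top_of_le_ne_top ENNReal.one_ne_top hOut_le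
    have hsor_lt : (sumOut p A θ).toReal < 1 := by
      have := (ENNReal.toReal_lt_toReal hOut_netop ENNReal.one_ne_top).2 hlt
      simpa using this
    have hnum_ne0 : (1 : ℝ≥0∞) - sumOut p A θ ≠ 0 := by
      rw [Ne, tsub_eq_zero_iff_le]
      exact not_le.2 hlt
    have hnum_netop : (1 : ℝ≥0∞) - sumOut p A θ ≠ ∞ :=
      ne_top_of_le_ne_top ENNReal.one_ne_top tsub_le_self
    have hcA_ne0 : cA p A θ ≠ 0 := by
      unfold cA
      simp only [Ne, ENNReal.div_eq_zero_iff, not_or]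
      exact ⟨hnum_ne0, hIn_fin⟩
    have hcA_netop : cA p A θ ≠ ∞ := by
      unfold cA
      rw [Ne, ENNReal.div_eq_top]
      push_neg
      exact ⟨fun _ => hIn_ne0, fun h => absurd h hnum_netop⟩
    have hSK_ne : SK ≠ ∞ := by
      intro hSK
      rw [hSK, ENNReal.mul_top hcA_ne0, top_add] at h1
      exact ENNReal.top_ne_one h1
    obtain ⟨hkrsum0, hkrval0⟩ := bridge h0 hθtop (hSKdef ▸ hSK_ne)
    have hkrtoReal : ∀ k : ℕ, ((if k ∈ A then (k : ℝ≥0∞) * p k else 0) : ℝ≥0∞).toReal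
        = (k : ℝ) * r k := by
      intro k
      rw [hrdef k]
      by_cases h : k ∈ A <;> simp [h]
    have hkrsum : Summable (fun k : ℕ => (k : ℝ) * r k * t ^ k) :=
      hkrsum0.congr fun k => by rw [hkrtoReal k]
    have hkrval : ∑' k : ℕ, (k : ℝ) * r k * t ^ k = t * SK.toReal := by
      rw [← hkrval0]
      exact tsum_congr fun k => by rw [hkrtoReal k]
    -- real form of the mean equation
    have hmul_ne : cA p A θ * SK ≠ ∞ := ENNReal.mul_ne_top hcA_netop hSK_ne
    have hreal : (cA p A θ).toReal * SK.toReal + SN.toReal = 1 := by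
      have := congrArg ENNReal.toReal h1
      rwa [ENNReal.toReal_add hmul_ne hSN_ne, ENNReal.toReal_mul, ENNReal.toReal_one] at this
    -- cA * sumIn = 1 - sumOut
    have hcancel : cA p A θ * sumIn p A θ = 1 - sumOut p A θ := by
      unfold cA
      exact ENNReal.div_mul_cancel hIn_ne0 hIn_fin
    have hcancel_r : (cA p A θ).toReal * (sumIn p A θ).toReal
        = 1 - (sumOut p A θ).toReal := by
      have := congrArg ENNReal.toReal hcancel
      rwa [ENNReal.toReal_mul, ENNReal.toReal_sub_of_le hOut_le ENNReal.one_ne_top,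
        ENNReal.toReal_one] at this
    have hDlt : (∑' k, q k * t ^ k) < t := by
      rw [hqval]
      nlinarith
    refine ⟨hDlt, hkrsum, ?_⟩
    rw [hqval, hrval, hnqval, hkrval]
    set cr : ℝ := (cA p A θ).toReal
    set sir : ℝ := (sumIn p A θ).toReal
    set sor : ℝ := (sumOut p A θ).toReal
    set skr : ℝ := SK.toReal
    set snr : ℝ := SN.toReal
    linear_combination (-(t^2) * skr) * hcancel_r + (t^2 * sir) * hreal
  · -- degenerate: sumOut = 1
    left
    have hcA0 : cA p A θ = 0 := by
      unfold cA
      rw [← heq, tsub_self, ENNReal.zero_div]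
    rw [hcA0, zero_mul, zero_add] at h1
    constructor
    · rw [hqval, heq]
      simp
    · rw [hnqval, h1]
      simp

/-- for a sub-critical offspring distribution `p` satisfying (H) and
`𝒜 ⊆ ℕ` with `p(𝒜) > 0`, there is at most one `θ ∈ I_𝒜` with `m^𝒜(θ) = 1`. -/
theorem unique_critical_theta
    (p : ℕ → ℝ≥0∞) (hp : ∑' n, p n = 1)
    (hp0 : 0 < p 0) (hp0' : p 0 < 1) (hp01 : p 0 + p 1 < 1)
    (hsub : ∑' n : ℕ, (n : ℝ≥0∞) * p n < 1)
    (A : Set ℕ) (hpA : 0 < ∑' k : ℕ, (if k ∈ A then p k else 0)) :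
    ∀ θ₁ θ₂ : ℝ≥0∞, memI p A θ₁ → memI p A θ₂ →
      meanA p A θ₁ = 1 → meanA p A θ₂ = 1 → θ₁ = θ₂ := by
  intro θ₁ θ₂ hm₁ hm₂ hmean₁ hmean₂
  set q : ℕ → ℝ := fun k => if k ∈ A then 0 else (p k).toReal with hqdef
  set r : ℕ → ℝ := fun k => if k ∈ A then (p k).toReal else 0 with hrdef
  have hq : ∀ n, 0 ≤ q n := by
    intro n
    rw [hqdef]
    by_cases h : n ∈ A <;> simp [h, ENNReal.toReal_nonneg]
  have hr : ∀ n, 0 ≤ r n := by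
    intro n
    rw [hrdef]
    by_cases h : n ∈ A <;> simp [h, ENNReal.toReal_nonneg]
  have hptop : ∀ k, p k ≠ ∞ := by
    intro k
    refine ne_top_of_le_ne_top (hp ▸ ENNReal.one_ne_top) ?_
    exact ENNReal.le_tsum k
  obtain ⟨ht1, hqs1, hnq1, hrs1, hqle1, hcase1⟩ :=
    extract p A θ₁ hpA hm₁ hmean₁ q r (fun k => rfl) (fun k => rfl)
  obtain ⟨ht2, hqs2, hnq2, hrs2, hqle2, hcase2⟩ :=
    extract p A θ₂ hpA hm₂ hmean₂ q r (fun k => rfl) (fun k => rfl)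
  refine (ENNReal.toReal_eq_toReal_iff' hm₁.2.1 hm₂.2.1).1 ?_
  by_contra hne
  have hq1lt : q 1 < 1 := by
    rw [hqdef]
    by_cases h : 1 ∈ A
    · simp [h]
    · simp only [h, if_neg, if_false]
      have hp1 : p 1 < 1 := lt_of_le_of_lt le_add_self hp01
      have := (ENNReal.toReal_lt_toReal (hptop 1) ENNReal.one_ne_top).2 hp1
      simpa using this
  have hrpos : ∃ a, 0 < r a := by
    obtain ⟨a, ha⟩ : ∃ a, (if a ∈ A then p a else 0) ≠ 0 := by
      by_contra h
      push_neg at h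
      have : (∑' k : ℕ, (if k ∈ A then p k else 0)) = 0 := by simp only [h, tsum_zero]
      rw [this] at hpA
      exact lt_irrefl 0 hpA
    have haA : a ∈ A := by
      by_contra h
      rw [if_neg h] at ha
      exact ha rfl
    have hpa : p a ≠ 0 := by rwa [if_pos haA] at ha
    refine ⟨a, ?_⟩
    rw [hrdef]
    simp only [if_pos haA]
    exact ENNReal.toReal_pos hpa (hptop a)
  have hbig : ∃ k, 2 ≤ k ∧ (0 < q k ∨ 0 < r k) := by
    obtain ⟨k, hk2, hpk⟩ : ∃ k, 2 ≤ k ∧ p k ≠ 0 := by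
      by_contra hcon
      push_neg at hcon
      have hsum : ∑' n, p n = p 0 + p 1 := by
        rw [tsum_eq_sum (s := ({0, 1} : Finset ℕ)) ?_]
        · simp
        · intro b hb
          simp only [Finset.mem_insert, Finset.mem_singleton] at hb
          push_neg at hb
          exact hcon b (by omega)
      rw [hp] at hsum
      rw [← hsum] at hp01
      exact lt_irrefl 1 hp01
    refine ⟨k, hk2, ?_⟩
    by_cases h : k ∈ A
    · right
      rw [hrdef]
      simp only [if_pos h]
      exact ENNReal.toReal_pos hpk (hptop k)
    · left
      rw [hqdef]
      simp only [if_neg h]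
      exact ENNReal.toReal_pos hpk (hptop k)
  rcases hcase1 with hdeg1 | hnon1
  · exact degen q hq ht2 ht1 (fun h => hne h.symm) hqs2 hqs1 hnq1 hdeg1.1 hdeg1.2 hqle2 hq1lt
  rcases hcase2 with hdeg2 | hnon2
  · exact degen q hq ht1 ht2 hne hqs1 hqs2 hnq2 hdeg2.1 hdeg2.2 hqle1 hq1lt
  rcases lt_trichotomy θ₁.toReal θ₂.toReal with hlt | heqt | hgt
  · exact real_main q r hq hr ht1 hlt hqs2 hnq2 hrs2 hnon2.2.1 hrpos hbig
      hnon1.1 hnon2.1 hnon1.2.2 hnon2.2.2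
  · exact hne heqt
  · exact real_main q r hq hr ht2 hgt hqs1 hnq1 hrs1 hnon1.2.1 hrpos hbig
      hnon2.1 hnon1.1 hnon2.2.2 hnon1.2.2

end GWPaper
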